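/- arXiv:2006.09344 — 2 statements merged into one kernel-verified Lean document; each statement's English description precedes it below -/
import Mathlib

section
/- Any two distinct points of F are separated by Euclidean distance at least c/q² for some absolute constant c > 0 (independent of q and d). -/
set_option maxHeartbeats 1000000

lemma coord_le_norm {m : ℕ} (x : EuclideanSpace ℝ (Fin m)) (i : Fin m) :
    |x i| ≤ ‖x‖ := by
  rw [EuclideanSpace.norm_eq]
  have h1 : |x i| = Real.sqrt (‖x i‖ ^ 2) := by
    rw [Real.sqrt_sq_eq_abs]; simp [abs_abs, Real.norm_eq_abs]
  rw [h1]
  apply Real.sqrt_le_sqrt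
  exact Finset.single_le_sum (f := fun j => ‖x j‖ ^ 2)
    (fun j _ => by positivity) (Finset.mem_univ i)

/-- Separation of `F`: there is an absolute constant `c > 0` (independent of
`q` and the dimension `d = n+1`) such that any two distinct points of `F` are
at Euclidean distance at least `c/q²`. -/
theorem stmt6 :
    ∃ c : ℝ, 0 < c ∧
      ∀ (q n : ℕ), 1 ≤ q → 1 ≤ n →
        ∀ (A B : Set ℝ),
          A = {x : ℝ | ∃ i : ℕ, 1 ≤ i ∧ i ≤ q ∧ x = ((q : ℝ) + i) / (2 * q)} →
          B = {x : ℝ | ∃ i : ℕ, 1 ≤ i ∧ i ≤ q ^ 2 ∧ x = ((q : ℝ) ^ 2 + i) / (2 * q ^ 2)} →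
          ∀ F : Set (EuclideanSpace ℝ (Fin (n + 1))),
            F = {p | ∃ (m : Fin n → ℝ) (b : ℝ), (∀ j, m j ∈ -A) ∧ b ∈ B ∧
              (∀ j : Fin n, p (Fin.castSucc j) = -(m j) / b) ∧ p (Fin.last n) = 1 / b} →
            ∀ p p', p ∈ F → p' ∈ F → p ≠ p' → c / (q : ℝ) ^ 2 ≤ ‖p - p'‖ := by
  refine ⟨1/2, by norm_num, ?_⟩
  intro q n hq hn A B hA hB F hF p p' hp hp' hne
  subst hA hB hF
  obtain ⟨m, b, hm, hb, hc, hl⟩ := hp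
  obtain ⟨m', b', hm', hb', hc', hl'⟩ := hp'
  have hQ : 1 ≤ (q:ℝ) := by exact_mod_cast hq
  have hQ0 : 0 < (q:ℝ) := lt_of_lt_of_le one_pos hQ
  obtain ⟨i, hi1, hi2, hbeq⟩ := hb
  obtain ⟨i', hi1', hi2', hbeq'⟩ := hb'
  have hiR : (1 : ℝ) ≤ (i : ℝ) := by exact_mod_cast hi1
  have hiR2 : (i : ℝ) ≤ (q:ℝ) ^ 2 := by exact_mod_cast hi2
  have hiR' : (1 : ℝ) ≤ (i' : ℝ) := by exact_mod_cast hi1'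
  have hiR2' : (i' : ℝ) ≤ (q:ℝ) ^ 2 := by exact_mod_cast hi2'
  have hbpos : 0 < b := by rw [hbeq]; positivity
  have hbpos' : 0 < b' := by rw [hbeq']; positivity
  have hble : b ≤ 1 := by
    rw [hbeq, div_le_one (by positivity)]; nlinarith
  by_cases hbb : b = b'
  · -- same b; some horizontal coordinate differs
    have hnej : ∃ j : Fin n, p (Fin.castSucc j) ≠ p' (Fin.castSucc j) := by
      by_contra h
      push_neg at h
      apply hne
      ext k
      induction k using Fin.lastCases with
      | last => rw [hl, hl', hbb]
      | cast j => exact h j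
    obtain ⟨j, hj⟩ := hnej
    obtain ⟨k, hk1, hk2, hak⟩ := hm j
    obtain ⟨k', hk1', hk2', hak'⟩ := hm' j
    have ha : -(m j) = ((q:ℝ) + k) / (2 * (q:ℝ)) := hak
    have ha' : -(m' j) = ((q:ℝ) + k') / (2 * (q:ℝ)) := hak'
    have hkk : k ≠ k' := by
      intro h
      apply hj
      rw [hc j, hc' j, ha, ha', h, hbb]
    have hkabs : (1 : ℝ) ≤ |(k : ℝ) - (k' : ℝ)| := by
      have : 1 ≤ |(k : ℤ) - (k' : ℤ)| := Int.one_le_abs (by omega)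
      have := (by exact_mod_cast this : (1:ℝ) ≤ |((k:ℤ) - (k':ℤ) : ℤ)|)
      push_cast at this ⊢
      convert this using 2
    have hdiff : p (Fin.castSucc j) - p' (Fin.castSucc j)
        = (((q:ℝ) : ℝ) - 0)⁻¹ * 0 + ((k : ℝ) - k') / (2 * (q:ℝ) * b) := by
      rw [hc j, hc' j, ha, ha', hbb]
      field_simp
      ring
    have habs : 1 / (2 * (q:ℝ)) ≤ |p (Fin.castSucc j) - p' (Fin.castSucc j)| := by
      rw [hdiff]
      simp only [sub_zero, mul_zero, zero_add]
      rw [abs_div, abs_of_pos (by positivity : (0:ℝ) < 2 * (q:ℝ) * b)]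
      rw [div_le_div_iff₀ (by positivity) (by positivity)]
      have hb2 : 2 * (q:ℝ) * b ≤ 2 * (q:ℝ) := by nlinarith
      nlinarith [abs_nonneg ((k:ℝ) - k')]
    have hnorm : |p (Fin.castSucc j) - p' (Fin.castSucc j)| ≤ ‖p - p'‖ := by
      have h := coord_le_norm (p - p') (Fin.castSucc j)
      rwa [PiLp.sub_apply] at h
    have : 1 / 2 / (q:ℝ) ^ 2 ≤ 1 / (2 * (q:ℝ)) := by
      rw [div_le_div_iff₀ (by positivity) (by positivity)]
      nlinarith
    linarith
  · -- different b; last coordinate differs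
    have hii : i ≠ i' := by
      intro h; apply hbb; rw [hbeq, hbeq', h]
    have hkabs : (1 : ℝ) ≤ |(i : ℝ) - (i' : ℝ)| := by
      have : 1 ≤ |(i : ℤ) - (i' : ℤ)| := Int.one_le_abs (by omega)
      have := (by exact_mod_cast this : (1:ℝ) ≤ |((i:ℤ) - (i':ℤ) : ℤ)|)
      push_cast at this ⊢
      convert this using 2
    have hdiff : p (Fin.last n) - p' (Fin.last n)
        = 2 * (q:ℝ) ^ 2 * ((i' : ℝ) - i) / (((q:ℝ) ^ 2 + i) * ((q:ℝ) ^ 2 + i')) := by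
      rw [hl, hl', hbeq, hbeq']
      have h1 : (0:ℝ) < (q:ℝ) ^ 2 + i := by positivity
      have h2 : (0:ℝ) < (q:ℝ) ^ 2 + i' := by positivity
      field_simp
      ring
    have habs : 1 / (2 * (q:ℝ) ^ 2) ≤ |p (Fin.last n) - p' (Fin.last n)| := by
      rw [hdiff, abs_div, abs_of_pos (by positivity : (0:ℝ) < ((q:ℝ) ^ 2 + i) * ((q:ℝ) ^ 2 + i'))]
      rw [div_le_div_iff₀ (by positivity) (by positivity)]
      have hnum : 2 * (q:ℝ) ^ 2 ≤ |2 * (q:ℝ) ^ 2 * ((i' : ℝ) - i)| := by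
        rw [abs_mul, abs_of_pos (by positivity : (0:ℝ) < 2 * (q:ℝ) ^ 2), abs_sub_comm]
        nlinarith
      have hden : ((q:ℝ) ^ 2 + i) * ((q:ℝ) ^ 2 + i') ≤ 4 * (q:ℝ) ^ 4 := by nlinarith
      nlinarith
    have hnorm : |p (Fin.last n) - p' (Fin.last n)| ≤ ‖p - p'‖ := by
      have h := coord_le_norm (p - p') (Fin.last n)
      rwa [PiLp.sub_apply] at h
    have : 1 / 2 / (q:ℝ) ^ 2 = 1 / (2 * (q:ℝ) ^ 2) := by ring
    linarith
end

section
/- There is a constant C = C(d,s) such that the discrete s-energy of F restricted to pairs agreeing in the first d−1 coordinates satisfies q^{−2d−2} ∑_{(p,p') ∈ 𝓕} |p_d − p'_d|^{−s} ≤ C, where 𝓕 = {(p,p') ∈ F × F : p_j = p'_j for j = 1,...,d−1, p_d ≠ p'_d}. -/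
open Pointwise

private lemma mem_image_ex {α β : Type*} (inst : DecidableEq β) (f : α → β) (s : Finset α)
    (p : β) (hp : p ∈ @Finset.image α β inst f s) : ∃ a ∈ s, f a = p :=
  (@Finset.mem_image α β inst f s p).mp hp

private lemma sum_le_sum_inj {α β : Type*} [DecidableEq β] {s : Finset α} {t : Finset β}
    {e : α → β} {f : α → ℝ} {g : β → ℝ}
    (hmap : ∀ a ∈ s, e a ∈ t) (hinj : ∀ a ∈ s, ∀ b ∈ s, e a = e b → a = b)
    (hle : ∀ a ∈ s, f a ≤ g (e a)) (hg : ∀ b ∈ t, 0 ≤ g b) :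
    ∑ a ∈ s, f a ≤ ∑ b ∈ t, g b :=
  calc ∑ a ∈ s, f a ≤ ∑ a ∈ s, g (e a) := Finset.sum_le_sum hle
    _ = ∑ b ∈ s.image e, g b := (Finset.sum_image hinj).symm
    _ ≤ ∑ b ∈ t, g b := Finset.sum_le_sum_of_subset_of_nonneg
        (Finset.image_subset_iff.mpr hmap) (fun b hb _ => hg b hb)

/-- The part of the discrete `s`-energy of `F` coming from pairs agreeing in the
first `d-1` coordinates is bounded: for `d = n+1 ≥ 3`, `1 < s < 2`,
`d/2 < s < (d+1)/2`, there is `C = C(d,s)` with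
`q^{-2d-2} ∑_{(p,p') ∈ 𝓕} |p_d - p'_d|^{-s} ≤ C`, where
`𝓕 = {(p,p') ∈ F × F : p_j = p'_j for j < d, p_d ≠ p'_d}`. -/
theorem stmt17 (n : ℕ) (hn : 2 ≤ n) (s : ℝ) (h1 : 1 < s) (h2 : s < 2)
    (hs1 : ((n : ℝ) + 1) / 2 < s) (hs2 : s < ((n : ℝ) + 2) / 2) :
    ∃ C : ℝ, 0 < C ∧ ∀ q : ℕ, 1 ≤ q →
      ∀ A B : Finset ℝ,
        A = (Finset.Icc 1 q).image (fun i : ℕ => ((q : ℝ) + i) / (2 * q)) →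
        B = (Finset.Icc 1 (q ^ 2)).image (fun i : ℕ => ((q : ℝ) ^ 2 + i) / (2 * (q : ℝ) ^ 2)) →
        ∀ F : Finset (EuclideanSpace ℝ (Fin (n + 1))),
          F = ((Fintype.piFinset fun _ : Fin n => -A) ×ˢ B).image
              (fun mb => WithLp.toLp 2 (Fin.snoc (fun j => -(mb.1 j) / mb.2) (1 / mb.2) : Fin (n + 1) → ℝ)) →
          (1 / (q : ℝ) ^ (2 * (n + 1) + 2)) *
              ∑ pp ∈ (F ×ˢ F).filter
                  (fun pp => (∀ j : Fin n, pp.1 (Fin.castSucc j) = pp.2 (Fin.castSucc j)) ∧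
                    pp.1 (Fin.last n) ≠ pp.2 (Fin.last n)),
                |pp.1 (Fin.last n) - pp.2 (Fin.last n)| ^ (-s) ≤ C := by
  have hssum : Summable (fun k : ℕ => (k : ℝ) ^ (-s)) :=
    Real.summable_nat_rpow.mpr (by linarith)
  set Z : ℝ := ∑' k : ℕ, (k : ℝ) ^ (-s) with hZdef
  have hZ0 : 0 ≤ Z := tsum_nonneg fun k => Real.rpow_nonneg (Nat.cast_nonneg k) _
  have h2s : (0:ℝ) ≤ (2:ℝ) ^ s := Real.rpow_nonneg (by norm_num) s
  refine ⟨(2:ℝ) ^ s * 2 * Z + 1, by nlinarith, ?_⟩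
  intro q hq A B hA hB F hF
  have hK1 : (1:ℝ) ≤ (q : ℝ) := by exact_mod_cast hq
  have hK0 : (0:ℝ) < (q : ℝ) := by linarith
  set K : ℝ := (q : ℝ) with hKdef
  set N : ℕ := q ^ 2 with hNdef
  have hNcast : ((N : ℕ) : ℝ) = K ^ 2 := by rw [hNdef]; push_cast; ring
  have hK2 : (0:ℝ) < K ^ 2 := pow_pos hK0 2
  have h2K2 : (0:ℝ) < 2 * K ^ 2 := by linarith
  -- facts about B
  have hBfact : ∀ b ∈ B, ∃ i ∈ Finset.Icc 1 N, b = (K ^ 2 + (i:ℝ)) / (2 * K ^ 2) := by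
    intro b hb
    rw [hB, Finset.mem_image] at hb
    obtain ⟨i, hi, h⟩ := hb
    exact ⟨i, hi, h.symm⟩
  have hBpos : ∀ b ∈ B, 0 < b := by
    intro b hb
    obtain ⟨i, _, rfl⟩ := hBfact b hb
    have hi0 : (0:ℝ) ≤ (i:ℝ) := Nat.cast_nonneg i
    exact div_pos (by linarith) (by linarith)
  -- structure of members of F
  have hmemF : ∀ p ∈ F, ∃ (m : Fin n → ℝ) (b : ℝ),
      m ∈ Fintype.piFinset (fun _ : Fin n => -A) ∧ b ∈ B ∧ 0 < b ∧
      (∀ j : Fin n, p (Fin.castSucc j) = -(m j) / b) ∧ p (Fin.last n) = 1 / b := by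
    intro p hp
    rw [hF] at hp
    obtain ⟨mb, hmb, hpe⟩ := mem_image_ex _ _ _ _ hp
    subst hpe
    rw [Finset.mem_product] at hmb
    exact ⟨mb.1, mb.2, hmb.1, hmb.2, hBpos _ hmb.2,
      fun j => by simp, by simp⟩
  set S1 := (F ×ˢ F).filter
      (fun pp => (∀ j : Fin n, pp.1 (Fin.castSucc j) = pp.2 (Fin.castSucc j)) ∧
        pp.1 (Fin.last n) ≠ pp.2 (Fin.last n)) with hS1
  -- the key structural decomposition of pairs in S1
  have key : ∀ pp ∈ S1, ∃ (m : Fin n → ℝ) (b b' : ℝ),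
      m ∈ Fintype.piFinset (fun _ : Fin n => -A) ∧ b ∈ B ∧ b' ∈ B ∧ b ≠ b' ∧
      ((fun j : Fin n => -(pp.1 (Fin.castSucc j)) / pp.1 (Fin.last n)) = m) ∧
      (1 / pp.1 (Fin.last n) = b) ∧ (1 / pp.2 (Fin.last n) = b') ∧
      (∀ j : Fin n, pp.1 (Fin.castSucc j) = -(m j) / b) ∧
      (∀ j : Fin n, pp.2 (Fin.castSucc j) = pp.1 (Fin.castSucc j)) ∧
      pp.1 (Fin.last n) = 1 / b ∧ pp.2 (Fin.last n) = 1 / b' := by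
    intro pp hpp
    rw [hS1, Finset.mem_filter, Finset.mem_product] at hpp
    obtain ⟨⟨hp1, hp2⟩, hcoord, hne⟩ := hpp
    obtain ⟨m, b, hm, hb, hbpos, hc1, hl1⟩ := hmemF pp.1 hp1
    obtain ⟨m', b', hm', hb', hbpos', hc2, hl2⟩ := hmemF pp.2 hp2
    have hb0 : b ≠ 0 := ne_of_gt hbpos
    refine ⟨m, b, b', hm, hb, hb', ?_, ?_, ?_, ?_, hc1, fun j => (hcoord j).symm, hl1, hl2⟩
    · intro h; exact hne (by rw [hl1, hl2, h])
    · funext j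
      rw [hc1 j, hl1]
      field_simp
    · rw [hl1, one_div_one_div]
    · rw [hl2, one_div_one_div]
  -- Step 1 : replace pairs of points by (m, b, b')
  have step1 : ∑ pp ∈ S1, |pp.1 (Fin.last n) - pp.2 (Fin.last n)| ^ (-s) ≤
      ∑ x ∈ (Fintype.piFinset fun _ : Fin n => -A) ×ˢ
          ((B ×ˢ B).filter fun bb => bb.1 ≠ bb.2),
        |1 / x.2.1 - 1 / x.2.2| ^ (-s) := by
    refine sum_le_sum_inj (e := fun pp =>
      ((fun j : Fin n => -(pp.1 (Fin.castSucc j)) / pp.1 (Fin.last n)),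
        (1 / pp.1 (Fin.last n), 1 / pp.2 (Fin.last n)))) ?_ ?_ ?_ ?_
    · intro pp hpp
      obtain ⟨m, b, b', hm, hb, hb', hbne, hE1, hE2, hE3, _, _, _, _⟩ := key pp hpp
      rw [Finset.mem_product]
      refine ⟨?_, ?_⟩
      · simpa [hE1] using hm
      · rw [Finset.mem_filter, Finset.mem_product]
        exact ⟨⟨by simpa [hE2] using hb, by simpa [hE3] using hb'⟩,
          by simpa [hE2, hE3] using hbne⟩
    · intro pp hpp qq hqq hE
      obtain ⟨m, b, b', hm, hb, hb', hbne, hE1, hE2, hE3, hc1, hc, hl1, hl2⟩ := key pp hpp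
      obtain ⟨m2, c, c', hm2, hcB, hc'B, hcne, hE1q, hE2q, hE3q, hc1q, hcq, hl1q, hl2q⟩ :=
        key qq hqq
      have hEm : m = m2 := by
        rw [← hE1, ← hE1q]; exact congrArg Prod.fst hE
      have hEb : b = c := by
        rw [← hE2, ← hE2q]; exact congrArg (fun x => x.2.1) hE
      have hEb' : b' = c' := by
        rw [← hE3, ← hE3q]; exact congrArg (fun x => x.2.2) hE
      have e1 : pp.1 = qq.1 := by
        refine PiLp.ext (fun x => ?_)
        refine Fin.lastCases ?_ (fun j => ?_) x
        · rw [hl1, hl1q, hEb]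
        · rw [hc1 j, hc1q j, hEb, hEm]
      have e2 : pp.2 = qq.2 := by
        refine PiLp.ext (fun x => ?_)
        refine Fin.lastCases ?_ (fun j => ?_) x
        · rw [hl2, hl2q, hEb']
        · rw [hc j, hcq j, e1]
      exact Prod.ext e1 e2
    · intro pp hpp
      simp [one_div_one_div]
    · intro x _
      exact Real.rpow_nonneg (abs_nonneg _) _
  -- Step 2 : factor out the m-count
  have cardPi : ((Fintype.piFinset fun _ : Fin n => -A).card : ℝ) ≤ K ^ n := by
    have hcard1 : (Fintype.piFinset fun _ : Fin n => -A).card ≤ q ^ n := by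
      rw [Fintype.card_piFinset]
      calc ∏ _i : Fin n, (-A).card ≤ ∏ _i : Fin n, q := by
            refine Finset.prod_le_prod' fun i _ => ?_
            rw [Finset.card_neg, hA]
            exact Finset.card_image_le.trans (by simp)
        _ = q ^ n := by simp
    calc ((Fintype.piFinset fun _ : Fin n => -A).card : ℝ) ≤ ((q ^ n : ℕ) : ℝ) := by
          exact_mod_cast hcard1
      _ = K ^ n := by push_cast; ring
  set BP := (B ×ˢ B).filter (fun bb => bb.1 ≠ bb.2) with hBP
  have hBPnonneg : (0:ℝ) ≤ ∑ bb ∈ BP, |1 / bb.1 - 1 / bb.2| ^ (-s) :=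
    Finset.sum_nonneg fun bb _ => Real.rpow_nonneg (abs_nonneg _) _
  have step2 : ∑ x ∈ (Fintype.piFinset fun _ : Fin n => -A) ×ˢ BP,
      |1 / x.2.1 - 1 / x.2.2| ^ (-s) ≤ K ^ n * ∑ bb ∈ BP, |1 / bb.1 - 1 / bb.2| ^ (-s) := by
    calc ∑ x ∈ (Fintype.piFinset fun _ : Fin n => -A) ×ˢ BP,
          |1 / x.2.1 - 1 / x.2.2| ^ (-s)
        = ∑ m ∈ (Fintype.piFinset fun _ : Fin n => -A), ∑ bb ∈ BP,
            |1 / bb.1 - 1 / bb.2| ^ (-s) :=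
          Finset.sum_product _ _ _
      _ = ((Fintype.piFinset fun _ : Fin n => -A).card : ℝ) *
            ∑ bb ∈ BP, |1 / bb.1 - 1 / bb.2| ^ (-s) := by
          rw [Finset.sum_const, nsmul_eq_mul]
      _ ≤ K ^ n * ∑ bb ∈ BP, |1 / bb.1 - 1 / bb.2| ^ (-s) :=
          mul_le_mul_of_nonneg_right cardPi hBPnonneg
  -- Step 3 : pass to the index pairs (i, i')
  set P := ((Finset.Icc 1 N) ×ˢ (Finset.Icc 1 N)).filter (fun ii => ii.1 ≠ ii.2) with hP
  have step3 : ∑ bb ∈ BP, |1 / bb.1 - 1 / bb.2| ^ (-s) ≤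
      (2 * K ^ 2) ^ s * ∑ ii ∈ P, |(ii.1 : ℝ) - (ii.2 : ℝ)| ^ (-s) := by
    refine le_trans (sum_le_sum_inj
      (e := fun bb : ℝ × ℝ => bb)
      (f := fun bb : ℝ × ℝ => |1 / bb.1 - 1 / bb.2| ^ (-s))
      (g := fun bb : ℝ × ℝ => |1 / bb.1 - 1 / bb.2| ^ (-s))
      (t := P.image fun ii : ℕ × ℕ => ((K ^ 2 + (ii.1:ℝ)) / (2 * K ^ 2),
        (K ^ 2 + (ii.2:ℝ)) / (2 * K ^ 2)))
      ?_ (fun a _ b _ h => h) (fun a _ => le_refl _)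
      (fun x _ => Real.rpow_nonneg (abs_nonneg _) _)) ?_
    · -- BP ⊆ image
      rintro ⟨b1, b2⟩ hbb
      rw [hBP, Finset.mem_filter, Finset.mem_product] at hbb
      obtain ⟨⟨hb1, hb2⟩, hne⟩ := hbb
      obtain ⟨i, hi, hbi⟩ := hBfact _ hb1
      obtain ⟨i', hi', hbi'⟩ := hBfact _ hb2
      have hbi1 : b1 = (K ^ 2 + (i:ℝ)) / (2 * K ^ 2) := hbi
      have hbi2 : b2 = (K ^ 2 + (i':ℝ)) / (2 * K ^ 2) := hbi'
      have hne' : b1 ≠ b2 := hne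
      rw [Finset.mem_image]
      refine ⟨(i, i'), ?_, ?_⟩
      · rw [hP, Finset.mem_filter, Finset.mem_product]
        refine ⟨⟨hi, hi'⟩, fun h => hne' ?_⟩
        have h' : i = i' := h
        rw [hbi1, hbi2, h']
      · show ((K ^ 2 + (i:ℝ)) / (2 * K ^ 2), (K ^ 2 + (i':ℝ)) / (2 * K ^ 2)) = (b1, b2)
        rw [hbi1, hbi2]
    · -- sum over the image ≤ (2K²)^s * sum over P
      have hne0 : (2 * K ^ 2 : ℝ) ≠ 0 := h2K2.ne'
      have hinjP : ∀ x ∈ P, ∀ y ∈ P,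
          ((K ^ 2 + (x.1:ℝ)) / (2 * K ^ 2), (K ^ 2 + (x.2:ℝ)) / (2 * K ^ 2)) =
          ((K ^ 2 + (y.1:ℝ)) / (2 * K ^ 2), (K ^ 2 + (y.2:ℝ)) / (2 * K ^ 2)) → x = y := by
        intro x _ y _ h
        rw [Prod.mk.injEq] at h
        obtain ⟨ha, hb⟩ := h
        rw [div_eq_div_iff hne0 hne0] at ha hb
        have h1 : (x.1 : ℝ) = y.1 := by
          have := mul_right_cancel₀ hne0 ha; linarith
        have h2 : (x.2 : ℝ) = y.2 := by
          have := mul_right_cancel₀ hne0 hb; linarith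
        exact Prod.ext (by exact_mod_cast h1) (by exact_mod_cast h2)
      rw [Finset.sum_image hinjP, Finset.mul_sum]
      refine Finset.sum_le_sum ?_
      rintro ⟨i, i'⟩ hii
      rw [hP, Finset.mem_filter, Finset.mem_product, Finset.mem_Icc, Finset.mem_Icc] at hii
      obtain ⟨⟨⟨hi1, hiN⟩, ⟨hi'1, hi'N⟩⟩, hne⟩ := hii
      simp only at hne
      show |1 / ((K ^ 2 + (i:ℝ)) / (2 * K ^ 2)) - 1 / ((K ^ 2 + (i':ℝ)) / (2 * K ^ 2))| ^ (-s)
        ≤ (2 * K ^ 2) ^ s * |(i : ℝ) - (i' : ℝ)| ^ (-s)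
      have hx1 : (1:ℝ) ≤ (i:ℝ) := by exact_mod_cast hi1
      have hxN : (i:ℝ) ≤ K ^ 2 := by rw [← hNcast]; exact_mod_cast hiN
      have hy1 : (1:ℝ) ≤ (i':ℝ) := by exact_mod_cast hi'1
      have hyN : (i':ℝ) ≤ K ^ 2 := by rw [← hNcast]; exact_mod_cast hi'N
      have hxy : (i:ℝ) ≠ (i':ℝ) := fun h => hne (by exact_mod_cast h)
      have hd1 : (0:ℝ) < K ^ 2 + (i:ℝ) := by linarith
      have hd2 : (0:ℝ) < K ^ 2 + (i':ℝ) := by linarith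
      have habs : |1 / ((K ^ 2 + (i:ℝ)) / (2 * K ^ 2)) - 1 / ((K ^ 2 + (i':ℝ)) / (2 * K ^ 2))|
          = 2 * K ^ 2 * |(i:ℝ) - (i':ℝ)| / ((K ^ 2 + (i:ℝ)) * (K ^ 2 + (i':ℝ))) := by
        rw [one_div_div, one_div_div, div_sub_div _ _ hd1.ne' hd2.ne', abs_div,
          abs_of_pos (mul_pos hd1 hd2),
          show (2 * K ^ 2) * (K ^ 2 + (i':ℝ)) - (K ^ 2 + (i:ℝ)) * (2 * K ^ 2)
            = 2 * K ^ 2 * ((i':ℝ) - (i:ℝ)) by ring,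
          abs_mul, abs_of_pos h2K2, abs_sub_comm]
      have habspos : (0:ℝ) < |(i:ℝ) - (i':ℝ)| := abs_pos.mpr (sub_ne_zero.mpr hxy)
      have hlow : |(i:ℝ) - (i':ℝ)| / (2 * K ^ 2) ≤
          2 * K ^ 2 * |(i:ℝ) - (i':ℝ)| / ((K ^ 2 + (i:ℝ)) * (K ^ 2 + (i':ℝ))) := by
        rw [div_le_div_iff₀ h2K2 (mul_pos hd1 hd2)]
        have hD : (K ^ 2 + (i:ℝ)) * (K ^ 2 + (i':ℝ)) ≤ (2 * K ^ 2) * (2 * K ^ 2) := by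
          nlinarith
        calc |(i:ℝ) - (i':ℝ)| * ((K ^ 2 + (i:ℝ)) * (K ^ 2 + (i':ℝ)))
            ≤ |(i:ℝ) - (i':ℝ)| * ((2 * K ^ 2) * (2 * K ^ 2)) :=
              mul_le_mul_of_nonneg_left hD (abs_nonneg _)
          _ = 2 * K ^ 2 * |(i:ℝ) - (i':ℝ)| * (2 * K ^ 2) := by ring
      calc |1 / ((K ^ 2 + (i:ℝ)) / (2 * K ^ 2)) - 1 / ((K ^ 2 + (i':ℝ)) / (2 * K ^ 2))| ^ (-s)
          ≤ (|(i:ℝ) - (i':ℝ)| / (2 * K ^ 2)) ^ (-s) := by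
            rw [habs]
            exact Real.rpow_le_rpow_of_nonpos (div_pos habspos h2K2) hlow
              (neg_nonpos.mpr (by linarith))
        _ = (2 * K ^ 2) ^ s * |(i:ℝ) - (i':ℝ)| ^ (-s) := by
            rw [Real.div_rpow (abs_nonneg _) h2K2.le, Real.rpow_neg h2K2.le,
              div_eq_mul_inv, inv_inv, mul_comm]
  -- Step 4 : the index sum is bounded by 2 K² Z
  have step4 : ∑ ii ∈ P, |(ii.1 : ℝ) - (ii.2 : ℝ)| ^ (-s) ≤ 2 * K ^ 2 * Z := by
    classical
    set Pl := ((Finset.Icc 1 N) ×ˢ (Finset.Icc 1 N)).filter (fun ii => ii.1 < ii.2) with hPl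
    set Pg := ((Finset.Icc 1 N) ×ˢ (Finset.Icc 1 N)).filter (fun ii => ii.2 < ii.1) with hPg
    have hsplit : P = Pl ∪ Pg := by
      rw [hP, hPl, hPg]
      ext ⟨i, i'⟩
      simp only [Finset.mem_filter, Finset.mem_union, Finset.mem_product, Finset.mem_Icc, ne_eq]
      omega
    have hdisj : Disjoint Pl Pg := by
      rw [Finset.disjoint_left]
      rintro ⟨i, i'⟩ h1 h2
      simp only [hPl, hPg, Finset.mem_filter, Finset.mem_product, Finset.mem_Icc] at h1 h2
      omega
    have hT : ∑ k ∈ Finset.Icc 1 N, (k : ℝ) ^ (-s) ≤ Z :=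
      Summable.sum_le_tsum _ (fun k _ => Real.rpow_nonneg (Nat.cast_nonneg k) _) hssum
    have htarget : ∑ x ∈ (Finset.Icc 1 N) ×ˢ (Finset.Icc 1 N), ((x.2 : ℕ) : ℝ) ^ (-s)
        ≤ K ^ 2 * Z := by
      calc ∑ x ∈ (Finset.Icc 1 N) ×ˢ (Finset.Icc 1 N), ((x.2 : ℕ) : ℝ) ^ (-s)
          = ∑ i ∈ Finset.Icc 1 N, ∑ k ∈ Finset.Icc 1 N, (k : ℝ) ^ (-s) :=
            Finset.sum_product _ _ _
        _ = ((Finset.Icc 1 N).card : ℝ) * ∑ k ∈ Finset.Icc 1 N, (k : ℝ) ^ (-s) := by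
            rw [Finset.sum_const, nsmul_eq_mul]
        _ ≤ ((Finset.Icc 1 N).card : ℝ) * Z :=
            mul_le_mul_of_nonneg_left hT (Nat.cast_nonneg _)
        _ = K ^ 2 * Z := by
            have : (Finset.Icc 1 N).card = N := by rw [Nat.card_Icc]; omega
            rw [this, hNcast]
    have hPlsum : ∑ ii ∈ Pl, |(ii.1 : ℝ) - (ii.2 : ℝ)| ^ (-s) ≤
        ∑ x ∈ (Finset.Icc 1 N) ×ˢ (Finset.Icc 1 N), ((x.2 : ℕ) : ℝ) ^ (-s) := by
      refine sum_le_sum_inj (e := fun ii : ℕ × ℕ => (ii.1, ii.2 - ii.1)) ?_ ?_ ?_ ?_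
      · rintro ⟨i, i'⟩ h
        simp only [hPl, Finset.mem_filter, Finset.mem_product, Finset.mem_Icc] at h
        simp only [Finset.mem_product, Finset.mem_Icc]
        omega
      · rintro ⟨i, i'⟩ h ⟨j, j'⟩ h' heq
        simp only [hPl, Finset.mem_filter, Finset.mem_product, Finset.mem_Icc] at h h'
        simp only [Prod.mk.injEq] at heq ⊢
        omega
      · rintro ⟨i, i'⟩ h
        simp only [hPl, Finset.mem_filter, Finset.mem_product, Finset.mem_Icc] at h
        have hle : i ≤ i' := le_of_lt h.2
        show |(i : ℝ) - (i' : ℝ)| ^ (-s) ≤ ((i' - i : ℕ) : ℝ) ^ (-s)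
        have hcast : |(i:ℝ) - (i':ℝ)| = ((i' - i : ℕ) : ℝ) := by
          rw [Nat.cast_sub hle, abs_sub_comm, abs_of_nonneg (by
            have : (i:ℝ) ≤ (i':ℝ) := by exact_mod_cast hle
            linarith)]
        rw [hcast]
      · intro x _
        exact Real.rpow_nonneg (Nat.cast_nonneg _) _
    have hPgsum : ∑ ii ∈ Pg, |(ii.1 : ℝ) - (ii.2 : ℝ)| ^ (-s) ≤
        ∑ x ∈ (Finset.Icc 1 N) ×ˢ (Finset.Icc 1 N), ((x.2 : ℕ) : ℝ) ^ (-s) := by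
      refine sum_le_sum_inj (e := fun ii : ℕ × ℕ => (ii.2, ii.1 - ii.2)) ?_ ?_ ?_ ?_
      · rintro ⟨i, i'⟩ h
        simp only [hPg, Finset.mem_filter, Finset.mem_product, Finset.mem_Icc] at h
        simp only [Finset.mem_product, Finset.mem_Icc]
        omega
      · rintro ⟨i, i'⟩ h ⟨j, j'⟩ h' heq
        simp only [hPg, Finset.mem_filter, Finset.mem_product, Finset.mem_Icc] at h h'
        simp only [Prod.mk.injEq] at heq ⊢
        omega
      · rintro ⟨i, i'⟩ h
        simp only [hPg, Finset.mem_filter, Finset.mem_product, Finset.mem_Icc] at h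
        have hle : i' ≤ i := le_of_lt h.2
        show |(i : ℝ) - (i' : ℝ)| ^ (-s) ≤ ((i - i' : ℕ) : ℝ) ^ (-s)
        have hcast : |(i:ℝ) - (i':ℝ)| = ((i - i' : ℕ) : ℝ) := by
          rw [Nat.cast_sub hle, abs_of_nonneg (by
            have : (i':ℝ) ≤ (i:ℝ) := by exact_mod_cast hle
            linarith)]
        rw [hcast]
      · intro x _
        exact Real.rpow_nonneg (Nat.cast_nonneg _) _
    calc ∑ ii ∈ P, |(ii.1 : ℝ) - (ii.2 : ℝ)| ^ (-s)
        = ∑ ii ∈ Pl, |(ii.1 : ℝ) - (ii.2 : ℝ)| ^ (-s)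
          + ∑ ii ∈ Pg, |(ii.1 : ℝ) - (ii.2 : ℝ)| ^ (-s) := by
          rw [hsplit, Finset.sum_union hdisj]
      _ ≤ K ^ 2 * Z + K ^ 2 * Z := add_le_add (hPlsum.trans htarget) (hPgsum.trans htarget)
      _ = 2 * K ^ 2 * Z := by ring
  -- Step 5 : assemble everything
  have hpow2 : (2 * K ^ 2 : ℝ) ^ s ≤ 2 ^ s * K ^ (n + 2) := by
    have e1 : (2 * K ^ 2 : ℝ) ^ s = 2 ^ s * ((K ^ 2 : ℝ)) ^ s :=
      Real.mul_rpow (by norm_num) (by positivity)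
    have e2 : ((K ^ 2 : ℝ)) ^ s = K ^ ((2:ℝ) * s) := by
      rw [← Real.rpow_natCast K 2, ← Real.rpow_mul hK0.le]
      norm_num
    have e3 : K ^ ((2:ℝ) * s) ≤ K ^ ((n:ℝ) + 2) :=
      Real.rpow_le_rpow_of_exponent_le hK1 (by linarith)
    have e4 : K ^ ((n:ℝ) + 2) = K ^ (n + 2 : ℕ) := by
      rw [← Real.rpow_natCast K (n + 2)]
      congr 1
      push_cast
      ring
    calc (2 * K ^ 2 : ℝ) ^ s = 2 ^ s * ((K ^ 2 : ℝ)) ^ s := e1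
      _ = 2 ^ s * K ^ ((2:ℝ) * s) := by rw [e2]
      _ ≤ 2 ^ s * K ^ ((n:ℝ) + 2) := mul_le_mul_of_nonneg_left e3 h2s
      _ = 2 ^ s * K ^ (n + 2 : ℕ) := by rw [e4]
  have hchain : ∑ pp ∈ S1, |pp.1 (Fin.last n) - pp.2 (Fin.last n)| ^ (-s) ≤
      K ^ n * ((2 * K ^ 2) ^ s * (2 * K ^ 2 * Z)) := by
    refine step1.trans (step2.trans ?_)
    refine mul_le_mul_of_nonneg_left ?_ (pow_nonneg hK0.le n)
    refine step3.trans ?_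
    exact mul_le_mul_of_nonneg_left step4 (Real.rpow_nonneg h2K2.le s)
  have hfinal : K ^ n * ((2 * K ^ 2) ^ s * (2 * K ^ 2 * Z)) ≤
      ((2:ℝ) ^ s * 2 * Z) * K ^ (2 * (n + 1) + 2) := by
    have h1 : K ^ n * ((2 * K ^ 2) ^ s * (2 * K ^ 2 * Z)) ≤
        K ^ n * ((2 ^ s * K ^ (n + 2)) * (2 * K ^ 2 * Z)) := by
      refine mul_le_mul_of_nonneg_left
        (mul_le_mul_of_nonneg_right hpow2 (mul_nonneg h2K2.le hZ0)) (pow_nonneg hK0.le n)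
    refine h1.trans (le_of_eq ?_)
    ring
  have hpowpos : (0:ℝ) < K ^ (2 * (n + 1) + 2) := pow_pos hK0 _
  calc (1 / K ^ (2 * (n + 1) + 2)) *
        ∑ pp ∈ S1, |pp.1 (Fin.last n) - pp.2 (Fin.last n)| ^ (-s)
      ≤ (1 / K ^ (2 * (n + 1) + 2)) * (((2:ℝ) ^ s * 2 * Z) * K ^ (2 * (n + 1) + 2)) :=
        mul_le_mul_of_nonneg_left (hchain.trans hfinal) (one_div_nonneg.mpr hpowpos.le)
    _ = ((2:ℝ) ^ s * 2 * Z) * (K ^ (2 * (n + 1) + 2) / K ^ (2 * (n + 1) + 2)) := by ring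
    _ = (2:ℝ) ^ s * 2 * Z := by rw [div_self hpowpos.ne', mul_one]
    _ ≤ (2:ℝ) ^ s * 2 * Z + 1 := by linarith
end
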